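/- The map θ sends D1(ξ,ℓ) into D2(ξ) and preserves the objective: for every (x,l) ∈ D1(ξ,ℓ) one has θ(x,l) ∈ D2(ξ) and F2(θ(x,l)) = F1(x,l). -/
import Mathlib


/-- The map θ sends D1(ξ,ℓ) into D2(ξ) and preserves the objective:
for every (x,l) ∈ D1(ξ,ℓ) one has θ(x,l) ∈ D2(ξ) and F2(θ(x,l)) = F1(x,l). -/
theorem theta_maps_D1_to_D2_and_preserves_objective
    (n : ℕ) (hn : 1 ≤ n) (ξ : ℝ) (hξ : 0 < ξ)
    (L : Fin n → ℝ) (hL : ∀ i, 1 < L i)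
    (s : ℝ) (h : Fin n → ℝ → ℝ)
    (x l : Fin n → ℝ)
    (hx : ∀ i, 0 ≤ x i) (hxsum : ∑ i, x i = ξ)
    (hl1 : ∀ i, 1 ≤ l i) (hl2 : ∀ i, l i ≤ L i) :
    let x0 : Fin n → ℝ := fun i => x i * (L i - l i) / (L i - 1)
    let x1 : Fin n → ℝ := fun i => x i * (l i - 1) / (L i - 1)
    -- θ(x,l) = (x0, x1) lies in D2(ξ):
    ((∀ i, 0 ≤ x0 i) ∧ (∀ i, 0 ≤ x1 i) ∧ (∑ i, x0 i) + (∑ i, x1 i) = ξ) ∧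
    -- and F2(θ(x,l)) = F1(x,l):
    (s * ∑ i, x0 i) + (s * ∑ i, x1 i * L i) - (∑ i, h i (x1 i * (L i - 1)))
      = (s * ∑ i, x i * l i) - (∑ i, h i (x i * (l i - 1))) := by
  intro x0 x1
  have hLpos : ∀ i, 0 < L i - 1 := fun i => by linarith [hL i]
  have hne : ∀ i, L i - 1 ≠ 0 := fun i => ne_of_gt (hLpos i)
  have hsum01 : ∀ i, x0 i + x1 i = x i := by
    intro i
    simp only [x0, x1]
    field_simp [hne i]
    ring
  have harg : ∀ i, x1 i * (L i - 1) = x i * (l i - 1) := by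
    intro i
    simp only [x1]
    field_simp [hne i]
  have hlin : ∀ i, x0 i + x1 i * L i = x i * l i := by
    intro i
    simp only [x0, x1]
    field_simp [hne i]
    ring
  refine ⟨⟨?_, ?_, ?_⟩, ?_⟩
  · intro i
    exact div_nonneg (mul_nonneg (hx i) (by linarith [hl2 i])) (le_of_lt (hLpos i))
  · intro i
    exact div_nonneg (mul_nonneg (hx i) (by linarith [hl1 i])) (le_of_lt (hLpos i))
  · rw [← Finset.sum_add_distrib]
    simp_rw [hsum01]
    exact hxsum
  · have : (∑ i, x0 i) + (∑ i, x1 i * L i) = ∑ i, x i * l i := by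
      rw [← Finset.sum_add_distrib]
      exact Finset.sum_congr rfl fun i _ => hlin i
    rw [← mul_add, this]
    congr 1
    exact Finset.sum_congr rfl fun i _ => by rw [harg i]
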